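/- arXiv:2311.03109 — 2 statements merged into one kernel-verified Lean document; each statement's English description precedes it below -/
import Mathlib

section
/- In the Ritz augmentation step, with A *_M ℙ_m = ℚ_m ×_{N+1} B_m^T, A^T *_N ℚ_m = ℙ_m ×_{M+1} B_m + β_m P_{m+1} ∘ e_m, approximate left singular tensors Ũ_i = ℚ_m ×_{N+1} u_i^T where (s_i, u_i, v_i) are singular triplets of B_m, and P_{m+1} of unit norm orthogonal to the slices of ℙ_m, the orthogonalization coefficients satisfy ρ_i = ⟨Ũ_i, A *_M P_{m+1}⟩ = β_m u_i(m). -/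
/-- Slice-wise application of `A` to a tensor with an extra last mode (`A *_M ℙ_m`). -/
def eprodSlices {ι κ : Type*} {m : ℕ} [Fintype κ] (A : ι → κ → ℝ) (P : κ → Fin m → ℝ) :
    ι → Fin m → ℝ := fun i j => ∑ k, A i k * P k j

/-- The `(M+1)`-mode product of `ℙ` with a matrix `B`. -/
def modeLast {κ : Type*} {m : ℕ} (P : κ → Fin m → ℝ) (B : Matrix (Fin m) (Fin m) ℝ) :
    κ → Fin m → ℝ := fun x i => ∑ k, P x k * B i k

/-- Contraction of the last mode against a vector (`X ×_{N+1} u^T`). -/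
def modeVec {κ : Type*} {m : ℕ} (X : κ → Fin m → ℝ) (u : Fin m → ℝ) : κ → ℝ :=
  fun x => ∑ k, u k * X x k

/-- The transpose of a tensor. -/
def ttrans {ι κ : Type*} (A : ι → κ → ℝ) : κ → ι → ℝ := fun k i => A i k

/-- Application of `A ∈ ℝ^{I×J}` to a tensor `V ∈ ℝ^{J}` (`A *_M V`). -/
def applyT {ι κ : Type*} [Fintype κ] (A : ι → κ → ℝ) (V : κ → ℝ) : ι → ℝ :=
  fun i => ∑ k, A i k * V k

/-- The outer product `R ∘ e`. -/
def outerLast {κ : Type*} {m : ℕ} (R : κ → ℝ) (e : Fin m → ℝ) : κ → Fin m → ℝ :=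
  fun x j => R x * e j

/-- The Frobenius inner product. -/
def tinner {κ : Type*} [Fintype κ] (X Y : κ → ℝ) : ℝ := ∑ x, X x * Y x

/-- In the Ritz augmentation step, with the Lanczos relations
`A *_M ℙ_m = ℚ_m ×_{N+1} B_m^T`,
`A^T *_N ℚ_m = ℙ_m ×_{M+1} B_m + β_m P_{m+1} ∘ e_m`, `(s_i, u_i, v_i)` a singular
triplet of `B_m`, `Ũ_i = ℚ_m ×_{N+1} u_i^T`, and `P_{m+1}` of unit norm orthogonal to
the slices of `ℙ_m`, the orthogonalization coefficients satisfy
`ρ_i = ⟨Ũ_i, A *_M P_{m+1}⟩ = β_m u_i(m)`. -/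
theorem ritz_orthogonalization_coefficient {ι κ : Type*} [Fintype ι] [Fintype κ] {m : ℕ}
    (A : ι → κ → ℝ) (P : κ → Fin (m + 1) → ℝ) (Q : ι → Fin (m + 1) → ℝ)
    (B : Matrix (Fin (m + 1)) (Fin (m + 1)) ℝ) (β : ℝ) (Pnew : κ → ℝ)
    (hP : ∀ i j, tinner (fun x => P x i) (fun x => P x j) = if i = j then 1 else 0)
    (hQ : ∀ i j, tinner (fun x => Q x i) (fun x => Q x j) = if i = j then 1 else 0)
    (hPnew_norm : tinner Pnew Pnew = 1)
    (hPnew_orth : ∀ j, tinner (fun x => P x j) Pnew = 0)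
    (h₁ : eprodSlices A P = modeLast Q B.transpose)
    (h₂ : eprodSlices (ttrans A) Q =
      modeLast P B + outerLast (β • Pnew) (Pi.single (Fin.last m) 1))
    (s : ℝ) (u v : Fin (m + 1) → ℝ)
    (hv : B.mulVec v = s • u) (hu : B.transpose.mulVec u = s • v) :
    tinner (modeVec Q u) (applyT A Pnew) = β * u (Fin.last m) := by
  have h2 : ∀ x k, (∑ i, A i x * Q i k)
      = (∑ l, P x l * B k l) + β * Pnew x * (Pi.single (Fin.last m) 1 : Fin (m+1) → ℝ) k := by
    intro x k
    have := congrFun (congrFun h₂ x) k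
    simpa [eprodSlices, modeLast, outerLast, ttrans, mul_comm, mul_assoc, mul_left_comm]
      using this
  have step : tinner (modeVec Q u) (applyT A Pnew)
      = ∑ k, u k * ∑ x, Pnew x * (∑ i, A i x * Q i k) := by
    unfold tinner modeVec applyT
    calc ∑ i, (∑ k, u k * Q i k) * (∑ j, A i j * Pnew j)
        = ∑ i, ∑ k, ∑ j, u k * Q i k * (A i j * Pnew j) := by
          simp only [Finset.sum_mul, Finset.mul_sum]
          exact Finset.sum_congr rfl fun _ _ => Finset.sum_comm
      _ = ∑ k, ∑ i, ∑ j, u k * Q i k * (A i j * Pnew j) := Finset.sum_comm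
      _ = ∑ k, ∑ j, ∑ i, u k * Q i k * (A i j * Pnew j) :=
          Finset.sum_congr rfl fun _ _ => Finset.sum_comm
      _ = ∑ k, u k * ∑ x, Pnew x * (∑ i, A i x * Q i k) := by
          refine Finset.sum_congr rfl fun k _ => ?_
          rw [Finset.mul_sum]
          refine Finset.sum_congr rfl fun x _ => ?_
          rw [Finset.mul_sum, Finset.mul_sum]
          exact Finset.sum_congr rfl fun i _ => by ring
  rw [step]
  have orth : ∀ l, (∑ x, P x l * Pnew x) = 0 := fun l => hPnew_orth l
  have norm1 : (∑ x, Pnew x * Pnew x) = 1 := hPnew_norm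
  have inner_eval : ∀ k, (∑ x, Pnew x * (∑ i, A i x * Q i k))
      = β * (Pi.single (Fin.last m) 1 : Fin (m+1) → ℝ) k := by
    intro k
    simp only [h2, mul_add, Finset.sum_add_distrib, Finset.mul_sum]
    rw [Finset.sum_comm]
    have : ∀ l, (∑ x, Pnew x * (P x l * B k l)) = 0 := by
      intro l
      have : (∑ x, Pnew x * (P x l * B k l)) = (∑ x, P x l * Pnew x) * B k l := by
        rw [Finset.sum_mul]; exact Finset.sum_congr rfl fun x _ => by ring
      rw [this, orth, zero_mul]
    simp only [this, Finset.sum_const_zero, zero_add]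
    have : (∑ x, Pnew x * (β * Pnew x * (Pi.single (Fin.last m) 1 : Fin (m+1) → ℝ) k))
        = (∑ x, Pnew x * Pnew x) * (β * (Pi.single (Fin.last m) 1 : Fin (m+1) → ℝ) k) := by
      rw [Finset.sum_mul]; exact Finset.sum_congr rfl fun x _ => by ring
    rw [this, norm1, one_mul]
  simp only [inner_eval, Pi.single_apply]
  simp [Finset.sum_ite_eq', mul_comm]
end

section
/- With the Ritz augmentation notation, each approximate right singular tensor Ṽ_i = ℙ_m ×_{M+1} v_i^T is a Ritz tensor of A^T *_N A: it satisfies A^T *_N A *_M Ṽ_i = s_i^2 Ṽ_i + s_i (R_m ∘ e_m) ×_{M+1} u_i^T. -/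
/-- With the Lanczos relations `A *_M ℙ_m = ℚ_m ×_{N+1} B_m^T` and
`A^T *_N ℚ_m = ℙ_m ×_{M+1} B_m + R_m ∘ e_m`, and `(s_i, u_i, v_i)` a singular triplet
of `B_m`, the approximate right singular tensor `Ṽ_i = ℙ_m ×_{M+1} v_i^T` is a Ritz
tensor of `A^T *_N A`:
`A^T *_N A *_M Ṽ_i = s_i² Ṽ_i + s_i (R_m ∘ e_m) ×_{M+1} u_i^T`. -/
theorem ritz_tensor_relation {ι κ : Type*} [Fintype ι] [Fintype κ] {m : ℕ}
    (A : ι → κ → ℝ) (P : κ → Fin (m + 1) → ℝ) (Q : ι → Fin (m + 1) → ℝ)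
    (B : Matrix (Fin (m + 1)) (Fin (m + 1)) ℝ) (R : κ → ℝ)
    (h₁ : eprodSlices A P = modeLast Q B.transpose)
    (h₂ : eprodSlices (ttrans A) Q =
      modeLast P B + outerLast R (Pi.single (Fin.last m) 1))
    (s : ℝ) (u v : Fin (m + 1) → ℝ)
    (hv : B.mulVec v = s • u) (hu : B.transpose.mulVec u = s • v) :
    applyT (ttrans A) (applyT A (modeVec P v)) =
      s ^ 2 • modeVec P v + s • modeVec (outerLast R (Pi.single (Fin.last m) 1)) u := by
  classical
  have e1 : ∀ i k, (∑ k', A i k' * P k' k) = ∑ j, Q i j * B j k := by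
    intro i k
    have := congrFun (congrFun h₁ i) k
    simpa [eprodSlices, modeLast, Matrix.transpose] using this
  have e2 : ∀ x j, (∑ i, A i x * Q i j)
      = (∑ k, P x k * B j k) + R x * ((Pi.single (Fin.last m) (1:ℝ) : Fin (m+1) → ℝ) j) := by
    intro x j
    have := congrFun (congrFun h₂ x) j
    simpa [eprodSlices, modeLast, ttrans, outerLast] using this
  have hv' : ∀ j, (∑ k, B j k * v k) = s * u j := by
    intro j
    have := congrFun hv j
    simpa [Matrix.mulVec, dotProduct] using this
  have hu' : ∀ k, (∑ j, B j k * u j) = s * v k := by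
    intro k
    have := congrFun hu k
    simpa [Matrix.mulVec, dotProduct, Matrix.transpose] using this
  have step1 : applyT A (modeVec P v) = fun i => s * ∑ j, u j * Q i j := by
    funext i
    show (∑ k', A i k' * ∑ k, v k * P k' k) = _
    calc (∑ k', A i k' * ∑ k, v k * P k' k)
        = ∑ k, v k * ∑ k', A i k' * P k' k := by
          simp only [Finset.mul_sum]
          rw [Finset.sum_comm]
          exact Finset.sum_congr rfl fun _ _ => Finset.sum_congr rfl fun _ _ => by ring
      _ = ∑ k, v k * ∑ j, Q i j * B j k := by simp only [e1]
      _ = ∑ j, Q i j * ∑ k, B j k * v k := by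
          simp only [Finset.mul_sum]
          rw [Finset.sum_comm]
          exact Finset.sum_congr rfl fun _ _ => Finset.sum_congr rfl fun _ _ => by ring
      _ = s * ∑ j, u j * Q i j := by
          simp only [hv', Finset.mul_sum]
          exact Finset.sum_congr rfl fun _ _ => by ring
  funext x
  show (∑ i, A i x * applyT A (modeVec P v) i)
      = s ^ 2 * (∑ k, v k * P x k)
        + s * ∑ j, u j * (R x * ((Pi.single (Fin.last m) (1:ℝ) : Fin (m+1) → ℝ) j))
  rw [step1]
  calc (∑ i, A i x * (s * ∑ j, u j * Q i j))
      = s * ∑ j, u j * ∑ i, A i x * Q i j := by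
        simp only [Finset.mul_sum]
        rw [Finset.sum_comm]
        exact Finset.sum_congr rfl fun _ _ => Finset.sum_congr rfl fun _ _ => by ring
    _ = s * ∑ j, u j * ((∑ k, P x k * B j k)
          + R x * ((Pi.single (Fin.last m) (1:ℝ) : Fin (m+1) → ℝ) j)) := by
        simp only [e2]
    _ = s * ((∑ k, (∑ j, B j k * u j) * P x k)
          + ∑ j, u j * (R x * ((Pi.single (Fin.last m) (1:ℝ) : Fin (m+1) → ℝ) j))) := by
        congr 1
        simp only [mul_add, Finset.sum_add_distrib, Finset.mul_sum, Finset.sum_mul]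
        congr 1
        rw [Finset.sum_comm]
        exact Finset.sum_congr rfl fun _ _ => Finset.sum_congr rfl fun _ _ => by ring
    _ = s ^ 2 * (∑ k, v k * P x k)
          + s * ∑ j, u j * (R x * ((Pi.single (Fin.last m) (1:ℝ) : Fin (m+1) → ℝ) j)) := by
        simp only [hu', mul_add, Finset.mul_sum]
        congr 1
        exact Finset.sum_congr rfl fun _ _ => by ring
end
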